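/- Every nonzero element y of S = span_{F_2}(M_a') of Hamming weight 3 that has the form y = 1 ⊕ 2^α ⊕ 2^{α'} with 0 < α < α' satisfies α' < a - m, where m = 2^b - a - 1. -/

import Mathlib

open scoped Classical

noncomputable section

/-- `b = ⌊log₂ a⌋ + 1`. -/
def bb (a : ℕ) : ℕ := Nat.log 2 a + 1

/-- `m = 2^b - a - 1`. -/
def mm (a : ℕ) : ℕ := 2 ^ bb a - a - 1

/-- `q = a - 2^(b-1)`. -/
def qq (a : ℕ) : ℕ := a - 2 ^ (bb a - 1)

/-- `M_a = {x : 0 < x ≤ a, x is not a power of 2}`. -/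
def Ma (a : ℕ) : Set ℕ := {x | 0 < x ∧ x ≤ a ∧ ¬ ∃ k, x = 2 ^ k}

/-- `g(x) = 2x` if bit `b-1` of `x` is `0`, else `g(x) = 2x + 1 - 2^b`. -/
def gg (a x : ℕ) : ℕ := if x.testBit (bb a - 1) then 2 * x + 1 - 2 ^ bb a else 2 * x

/-- `f'(x) = x` if `x ∈ M_a`, else `f'(x) = x + 1 - 2⌈m/2⌉` (intended domain `g(M_a)`). -/
def ff' (a x : ℕ) : ℕ := if x ∈ Ma a then x else x + 1 - 2 * ((mm a + 1) / 2)

/-- `f = f' ∘ g`. -/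
def ff (a x : ℕ) : ℕ := ff' a (gg a x)

/-- the `j`-th binary digit of `x`, as a natural number. -/
def bitv (x j : ℕ) : ℕ := if x.testBit j then 1 else 0

/-- `h(x) = 2^(f(x)-1) + Σ_{j=0}^{b-2} x_j 2^(2^(j+1)-1) + x_{b-1}`. -/
def hh (a x : ℕ) : ℕ :=
  2 ^ (ff a x - 1) + (∑ j ∈ Finset.range (bb a - 1), bitv x j * 2 ^ (2 ^ (j + 1) - 1)) +
    bitv x (bb a - 1)

/-- Hamming weight of `x` viewed as a vector in `F_2^a`. -/
def wt (a x : ℕ) : ℕ := ((Finset.range a).filter (fun j => x.testBit j)).card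

/-- identification of `Z_{2^a}` with `F_2^a` via radix-2 representation. -/
def toVec (a x : ℕ) : Fin a → ZMod 2 := fun j => if x.testBit (j : ℕ) then 1 else 0

/-- `S`, the `F_2`-span of `M_a' = h(M_a)` inside `F_2^a`. -/
def Ssub (a : ℕ) : Submodule (ZMod 2) (Fin a → ZMod 2) :=
  Submodule.span (ZMod 2) (toVec a '' (hh a '' Ma a))

/-- `P_a = {0, 2^0, 2^1, …, 2^(a-1)}`. -/
def Pa (a : ℕ) : Set ℕ := {0} ∪ {y | ∃ j < a, y = 2 ^ j}

/-- `Q_a = ∅` if `a+1` is a power of `2`, else `{1 ⊕ 2^j : a-m ≤ j ≤ a-1}`. -/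
def Qa (a : ℕ) : Set ℕ :=
  if ∃ k, a + 1 = 2 ^ k then ∅ else {y | ∃ j, a - mm a ≤ j ∧ j < a ∧ y = 1 ^^^ 2 ^ j}

/-- `T_a = P_a ∪ Q_a`. -/
def Ta (a : ℕ) : Set ℕ := Pa a ∪ Qa a

end

lemma zmod2_eq_one : ∀ {u : ZMod 2}, u ≠ 0 → u = 1 := by decide

lemma add_eq_or_of_and_eq_zero : ∀ x y : ℕ, x &&& y = 0 → x + y = x ||| y := by
  intro x
  induction x using Nat.strong_induction_on with
  | _ x ih =>
    intro y h
    rcases Nat.eq_zero_or_pos x with hx | hx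
    · simp [hx]
    have hd : x / 2 &&& y / 2 = 0 := by rw [← Nat.and_div_two, h]
    have ih2 : x / 2 + y / 2 = x / 2 ||| y / 2 :=
      ih (x / 2) (Nat.div_lt_self hx (by norm_num)) (y / 2) hd
    have hmod : ¬ (x % 2 = 1 ∧ y % 2 = 1) := by
      intro hc
      have := Nat.and_mod_two_eq_one.mpr hc
      rw [h] at this
      simp at this
    have hor : (x ||| y) % 2 = 1 ↔ x % 2 = 1 ∨ y % 2 = 1 := Nat.or_mod_two_eq_one
    have hdiv : (x ||| y) / 2 = x / 2 ||| y / 2 := Nat.or_div_two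
    have e1 := Nat.div_add_mod x 2
    have e2 := Nat.div_add_mod y 2
    have e3 := Nat.div_add_mod (x ||| y) 2
    have m1 : x % 2 < 2 := Nat.mod_lt _ (by norm_num)
    have m2 : y % 2 < 2 := Nat.mod_lt _ (by norm_num)
    have m3 : (x ||| y) % 2 < 2 := Nat.mod_lt _ (by norm_num)
    rw [hdiv, ← ih2] at e3
    rcases hor with ⟨hor1, hor2⟩
    omega

lemma sum_pow_lt (c pos : ℕ → ℕ) (hc : ∀ j, c j ≤ 1) (hpos : ∀ j, pos j < pos (j + 1)) :
    ∀ n, (∑ j ∈ Finset.range n, c j * 2 ^ pos j) < 2 ^ pos n := by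
  intro n
  induction n with
  | zero => simpa using Nat.pos_pow_of_pos _ (by norm_num)
  | succ n ihn =>
    rw [Finset.sum_range_succ]
    have h1 : c n * 2 ^ pos n ≤ 2 ^ pos n := by
      calc c n * 2 ^ pos n ≤ 1 * 2 ^ pos n := Nat.mul_le_mul_right _ (hc n)
      _ = 2 ^ pos n := one_mul _
    have h2 : 2 ^ (pos n + 1) ≤ 2 ^ pos (n + 1) := Nat.pow_le_pow_right (by norm_num) (hpos n)
    have h3 : (2:ℕ) ^ (pos n + 1) = 2 * 2 ^ pos n := by rw [pow_succ]; ring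
    omega

lemma sum_pow_testBit (c pos : ℕ → ℕ) (hc : ∀ j, c j ≤ 1) (hpos : ∀ j, pos j < pos (j + 1)) :
    ∀ n p, (∑ j ∈ Finset.range n, c j * 2 ^ pos j).testBit p = true ↔
      ∃ j, j < n ∧ c j = 1 ∧ pos j = p := by
  intro n
  induction n with
  | zero => simp
  | succ n ihn =>
    intro p
    rw [Finset.sum_range_succ]
    have hlt := sum_pow_lt c pos hc hpos n
    rcases Nat.le_one_iff_eq_zero_or_eq_one.mp (hc n) with h0 | h1
    · rw [h0]
      simp only [zero_mul, add_zero, ihn]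
      constructor
      · rintro ⟨j, hj, hcj, hpj⟩; exact ⟨j, by omega, hcj, hpj⟩
      · rintro ⟨j, hj, hcj, hpj⟩
        refine ⟨j, ?_, hcj, hpj⟩
        rcases Nat.lt_succ_iff_lt_or_eq.mp hj with h | h
        · exact h
        · subst h; rw [h0] at hcj; omega
    · rw [h1, one_mul]
      have hand : (∑ j ∈ Finset.range n, c j * 2 ^ pos j) &&& 2 ^ pos n = 0 := by
        rw [Nat.and_two_pow, Nat.testBit_lt_two_pow hlt]
        simp
      have : (∑ j ∈ Finset.range n, c j * 2 ^ pos j) + 2 ^ pos n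
          = (∑ j ∈ Finset.range n, c j * 2 ^ pos j) ||| 2 ^ pos n :=
        add_eq_or_of_and_eq_zero _ _ hand
      rw [this, Nat.testBit_or]
      simp only [Bool.or_eq_true, ihn, Nat.testBit_two_pow, decide_eq_true_eq]
      constructor
      · rintro (⟨j, hj, hcj, hpj⟩ | hp)
        · exact ⟨j, by omega, hcj, hpj⟩
        · exact ⟨n, by omega, h1, hp⟩
      · rintro ⟨j, hj, hcj, hpj⟩
        rcases Nat.lt_succ_iff_lt_or_eq.mp hj with h | h
        · exact Or.inl ⟨j, h, hcj, hpj⟩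
        · subst h; exact Or.inr hpj

section Aux

lemma testBit_true_iff {x k : ℕ} (h : x < 2 ^ (k + 1)) : x.testBit k = true ↔ 2 ^ k ≤ x := by
  constructor
  · exact Nat.ge_two_pow_of_testBit
  · intro hle
    have hdiv : x / 2 ^ k = 1 := by
      rw [pow_succ] at h
      rcases Nat.exists_eq_add_of_le hle with ⟨r, hr⟩
      subst hr
      rw [Nat.add_div_left _ (Nat.pow_pos (by norm_num)) ] at *
      have : r / 2 ^ k = 0 := Nat.div_eq_of_lt (by omega)
      omega
    rw [Nat.testBit_eq_decide_div_mod_eq, hdiv]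
    simp

lemma two_bits_le {x i k : ℕ} (hik : i < k) (hi : x.testBit i = true) (hk : x.testBit k = true) :
    2 ^ k + 2 ^ i ≤ x := by
  have h1 : 2 ^ i ≤ x % 2 ^ k := by
    apply Nat.ge_two_pow_of_testBit
    rw [Nat.testBit_mod_two_pow]
    simp [hik, hi]
  have h2 : 2 ^ k ≤ x := Nat.ge_two_pow_of_testBit hk
  have e := Nat.div_add_mod x (2 ^ k)
  have h3 : 1 ≤ x / 2 ^ k := (Nat.one_le_div_iff (Nat.pow_pos (by norm_num))).mpr h2
  have h4 : 2 ^ k * 1 ≤ 2 ^ k * (x / 2 ^ k) := Nat.mul_le_mul_left _ h3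
  omega

lemma bb_two_le {a : ℕ} (ha : 3 ≤ a) : 2 ≤ bb a := by
  have : 0 < Nat.log 2 a := Nat.log_pos (by norm_num) (by omega)
  rw [bb]; omega

lemma pow_bb_pred_le {a : ℕ} (ha : 3 ≤ a) : 2 ^ (bb a - 1) ≤ a := by
  have hb : bb a - 1 = Nat.log 2 a := by rw [bb]; omega
  rw [hb]
  exact Nat.pow_log_le_self 2 (by omega)

lemma lt_pow_bb {a : ℕ} (ha : 3 ≤ a) : a < 2 ^ bb a := by
  have : bb a = Nat.log 2 a + 1 := rfl
  rw [this]
  exact Nat.lt_pow_succ_log_self (by norm_num) a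

lemma pow_bb_eq {a : ℕ} (ha : 3 ≤ a) : 2 ^ bb a = 2 * 2 ^ (bb a - 1) := by
  have h := bb_two_le ha
  conv_lhs => rw [show bb a = (bb a - 1) + 1 by omega]
  rw [pow_succ]; ring

lemma Ma_three_le {a x : ℕ} (hx : x ∈ Ma a) : 3 ≤ x := by
  obtain ⟨h1, h2, h3⟩ := hx
  by_contra h
  interval_cases x
  · exact h3 ⟨0, rfl⟩
  · exact h3 ⟨1, rfl⟩

lemma odd_not_pow {n : ℕ} (hodd : n % 2 = 1) (h3 : 3 ≤ n) : ¬ ∃ k, n = 2 ^ k := by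
  rintro ⟨k, rfl⟩
  cases k with
  | zero => simp at h3
  | succ k =>
    rw [pow_succ] at hodd
    omega

lemma double_not_pow {x : ℕ} (hx : 0 < x) (h : ¬ ∃ k, x = 2 ^ k) : ¬ ∃ k, 2 * x = 2 ^ k := by
  rintro ⟨k, hk⟩
  cases k with
  | zero => omega
  | succ k =>
    rw [pow_succ] at hk
    exact h ⟨k, by omega⟩

end Aux

section FF

lemma ff_describe {a x : ℕ} (ha : 3 ≤ a) (hx : x ∈ Ma a) :
    (x.testBit (bb a - 1) = true ∧ ff a x = 2 * x + 1 - 2 ^ bb a ∧ 2 ^ (bb a - 1) < x) ∨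
    (x.testBit (bb a - 1) = false ∧ 2 * x ≤ a ∧ ff a x = 2 * x ∧ x < 2 ^ (bb a - 1)) ∨
    (x.testBit (bb a - 1) = false ∧ a < 2 * x ∧
      ff a x = 2 * x + 1 - 2 * ((mm a + 1) / 2) ∧ x < 2 ^ (bb a - 1)) := by
  obtain ⟨hx0, hxa, hxnp⟩ := hx
  have h2P : 2 ^ bb a = 2 * 2 ^ (bb a - 1) := pow_bb_eq ha
  have hPa : 2 ^ (bb a - 1) ≤ a := pow_bb_pred_le ha
  have haP : a < 2 ^ bb a := lt_pow_bb ha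
  have hxlt : x < 2 ^ ((bb a - 1) + 1) := by rw [pow_succ]; omega
  have htb := testBit_true_iff hxlt
  by_cases ht : x.testBit (bb a - 1) = true
  · left
    have hPx : 2 ^ (bb a - 1) < x := by
      have h1 : 2 ^ (bb a - 1) ≤ x := htb.mp ht
      rcases Nat.lt_or_ge (2 ^ (bb a - 1)) x with h | h
      · exact h
      · exfalso; exact hxnp ⟨bb a - 1, by omega⟩
    refine ⟨ht, ?_, hPx⟩
    have hvM : (2 * x + 1 - 2 ^ bb a) ∈ Ma a := by
      refine ⟨by omega, by omega, odd_not_pow (by omega) (by omega)⟩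
    rw [ff, gg, if_pos ht, ff', if_pos hvM]
  · have ht' : x.testBit (bb a - 1) = false := by simpa using ht
    have hxP : x < 2 ^ (bb a - 1) := by
      rcases Nat.lt_or_ge x (2 ^ (bb a - 1)) with h | h
      · exact h
      · exact absurd (htb.mpr h) ht
    right
    by_cases h2 : 2 * x ≤ a
    · left
      refine ⟨ht', h2, ?_, hxP⟩
      have hvM : (2 * x) ∈ Ma a := ⟨by omega, h2, double_not_pow hx0 hxnp⟩
      rw [ff, gg, if_neg ht, ff', if_pos hvM]
    · right
      refine ⟨ht', by omega, ?_, hxP⟩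
      have hvM : (2 * x) ∉ Ma a := fun hc => h2 hc.2.1
      rw [ff, gg, if_neg ht, ff', if_neg hvM]

lemma ff_facts {a x : ℕ} (ha : 3 ≤ a) (hx : x ∈ Ma a) :
    3 ≤ ff a x ∧ ff a x ≤ a ∧ (¬ ∃ k, ff a x = 2 ^ k) ∧
      (x.testBit (bb a - 1) = true → ff a x ≤ a - mm a) ∧
      (2 * x ≤ a → ff a x = 2 * x) := by
  have hx3 := Ma_three_le hx
  obtain ⟨hx0, hxa, hxnp⟩ := hx
  have h2P : 2 ^ bb a = 2 * 2 ^ (bb a - 1) := pow_bb_eq ha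
  have hPa : 2 ^ (bb a - 1) ≤ a := pow_bb_pred_le ha
  have haP : a < 2 ^ bb a := lt_pow_bb ha
  have hm : mm a = 2 ^ bb a - a - 1 := rfl
  have hc1 : mm a ≤ 2 * ((mm a + 1) / 2) := by omega
  have hc2 : 2 * ((mm a + 1) / 2) ≤ mm a + 1 := by omega
  rcases ff_describe ha ⟨hx0, hxa, hxnp⟩ with ⟨ht, he, hb⟩ | ⟨ht, h2, he, hb⟩ | ⟨ht, h2, he, hb⟩
  · refine ⟨by omega, by omega, odd_not_pow (by omega) (by omega), fun _ => by omega,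
      fun hle => by omega⟩
  · exact ⟨by omega, by omega, he ▸ double_not_pow hx0 hxnp,
      fun htop => by rw [ht] at htop; exact absurd htop (by simp), fun _ => he⟩
  · refine ⟨by omega, by omega, odd_not_pow (by omega) (by omega),
      fun htop => by rw [ht] at htop; exact absurd htop (by simp), fun hle => by omega⟩

lemma ff_inj {a : ℕ} (ha : 3 ≤ a) : Set.InjOn (ff a) (Ma a) := by
  intro x1 hx1 x2 hx2 heq
  have h31 := Ma_three_le hx1
  have h32 := Ma_three_le hx2
  have ha1 := hx1.2.1
  have ha2 := hx2.2.1
  have h2P : 2 ^ bb a = 2 * 2 ^ (bb a - 1) := pow_bb_eq ha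
  have hPa : 2 ^ (bb a - 1) ≤ a := pow_bb_pred_le ha
  have haP : a < 2 ^ bb a := lt_pow_bb ha
  have hm : mm a = 2 ^ bb a - a - 1 := rfl
  have hc1 : mm a ≤ 2 * ((mm a + 1) / 2) := by omega
  have hc2 : 2 * ((mm a + 1) / 2) ≤ mm a + 1 := by omega
  rcases ff_describe ha hx1 with ⟨_, he1, hb1⟩ | ⟨_, h21, he1, hb1⟩ | ⟨_, h21, he1, hb1⟩ <;>
    rcases ff_describe ha hx2 with ⟨_, he2, hb2⟩ | ⟨_, h22, he2, hb2⟩ | ⟨_, h22, he2, hb2⟩ <;>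
    omega

end FF

section HH

lemma bitv_le_one (x j : ℕ) : bitv x j ≤ 1 := by
  rw [bitv]; split <;> omega

lemma hh_decomp {a x : ℕ} (ha : 3 ≤ a) :
    hh a x = 2 ^ (ff a x - 1) +
      ∑ i ∈ Finset.range (bb a),
        (if i = 0 then bitv x (bb a - 1) else bitv x (i - 1)) * 2 ^ (2 ^ i - 1) := by
  have hb := bb_two_le ha
  have hsplit : bb a = (bb a - 1) + 1 := by omega
  rw [hh]
  conv_rhs => rw [hsplit]
  rw [Finset.sum_range_succ']
  simp only [Nat.add_eq_zero, one_ne_zero, and_false, if_false, pow_zero,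
    Nat.add_sub_cancel, mul_one, if_true, pow_one]
  norm_num
  ring

lemma hh_testBit {a x : ℕ} (ha : 3 ≤ a) (hx : x ∈ Ma a) (p : ℕ) :
    (hh a x).testBit p = true ↔
      p = ff a x - 1 ∨
        ∃ i, i < bb a ∧ (if i = 0 then x.testBit (bb a - 1) else x.testBit (i - 1)) = true ∧
          p = 2 ^ i - 1 := by
  obtain ⟨hf3, hfa, hfnp, -, -⟩ := ff_facts ha hx
  set c : ℕ → ℕ := fun i => if i = 0 then bitv x (bb a - 1) else bitv x (i - 1) with hcdef
  set pos : ℕ → ℕ := fun i => 2 ^ i - 1 with hposdef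
  have hc : ∀ j, c j ≤ 1 := by
    intro j; rw [hcdef]; dsimp only; split <;> exact bitv_le_one _ _
  have hpos : ∀ j, pos j < pos (j + 1) := by
    intro j
    have : (2:ℕ) ^ j < 2 ^ (j + 1) := Nat.pow_lt_pow_right (by norm_num) (by omega)
    have h1 : (1:ℕ) ≤ 2 ^ j := Nat.one_le_two_pow
    rw [hposdef]; dsimp only; omega
  have hchar := sum_pow_testBit c pos hc hpos (bb a)
  set V : ℕ := ∑ i ∈ Finset.range (bb a), c i * 2 ^ pos i with hVdef
  have hdecomp : hh a x = 2 ^ (ff a x - 1) + V := hh_decomp ha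
  have hVf : V.testBit (ff a x - 1) = false := by
    rw [← Bool.not_eq_true, hchar]
    rintro ⟨i, hib, hci, hpi⟩
    have h1 : (1:ℕ) ≤ 2 ^ i := Nat.one_le_two_pow
    have : ff a x = 2 ^ i := by rw [hposdef] at hpi; dsimp only at hpi; omega
    exact hfnp ⟨i, this⟩
  have hand : 2 ^ (ff a x - 1) &&& V = 0 := by
    rw [Nat.and_comm, Nat.and_two_pow, hVf]
    simp
  rw [hdecomp, add_eq_or_of_and_eq_zero _ _ hand, Nat.testBit_or]
  simp only [Bool.or_eq_true, Nat.testBit_two_pow, decide_eq_true_eq, hchar]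
  constructor
  · rintro (h | ⟨i, hib, hci, hpi⟩)
    · exact Or.inl h.symm
    · refine Or.inr ⟨i, hib, ?_, hpi.symm⟩
      rw [hcdef] at hci; dsimp only at hci
      by_cases h0 : i = 0
      · subst h0
        rw [if_pos rfl] at hci ⊢
        rw [bitv] at hci
        split at hci
        · assumption
        · omega
      · rw [if_neg h0] at hci ⊢
        rw [bitv] at hci
        split at hci
        · assumption
        · omega
  · rintro (h | ⟨i, hib, hti, hpi⟩)
    · exact Or.inl h.symm
    · refine Or.inr ⟨i, hib, ?_, hpi.symm⟩
      rw [hcdef]; dsimp only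
      by_cases h0 : i = 0
      · subst h0
        rw [if_pos rfl] at hti ⊢
        rw [bitv, if_pos hti]
      · rw [if_neg h0] at hti ⊢
        rw [bitv, if_pos hti]

end HH

section Cors

variable {a x : ℕ}

lemma hh_bit0 (ha : 3 ≤ a) (hx : x ∈ Ma a) :
    (hh a x).testBit 0 = true ↔ x.testBit (bb a - 1) = true := by
  rw [hh_testBit ha hx]
  obtain ⟨hf3, -, -, -, -⟩ := ff_facts ha hx
  have hb := bb_two_le ha
  constructor
  · rintro (h | ⟨i, hib, hti, hpi⟩)
    · omega
    · have hi0 : i = 0 := by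
        by_contra h0
        have h2 : (2:ℕ) ^ 1 ≤ 2 ^ i := Nat.pow_le_pow_right (by norm_num) (by omega)
        simp at h2
        omega
      subst hi0
      rwa [if_pos rfl] at hti
  · intro ht
    exact Or.inr ⟨0, by omega, by rw [if_pos rfl]; exact ht, by norm_num⟩

lemma hh_bit_special (ha : 3 ≤ a) (hx : x ∈ Ma a) {i : ℕ} (hi0 : i ≠ 0) (hib : i < bb a) :
    (hh a x).testBit (2 ^ i - 1) = true ↔ x.testBit (i - 1) = true := by
  rw [hh_testBit ha hx]
  obtain ⟨hf3, -, hfnp, -, -⟩ := ff_facts ha hx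
  have h2 : (2:ℕ) ≤ 2 ^ i := by
    have := Nat.pow_le_pow_right (show 1 ≤ 2 by norm_num) (show 1 ≤ i by omega)
    simpa using this
  constructor
  · rintro (h | ⟨i', hib', hti', hpi'⟩)
    · exact absurd ⟨i, by omega⟩ hfnp
    · have h1' : (1:ℕ) ≤ 2 ^ i' := Nat.one_le_two_pow
      have he : (2:ℕ) ^ i = 2 ^ i' := by omega
      have : i = i' := Nat.pow_right_injective (le_refl 2) he
      subst this
      rwa [if_neg hi0] at hti'
  · intro ht
    exact Or.inr ⟨i, hib, by rw [if_neg hi0]; exact ht, rfl⟩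

lemma hh_bit_ff (ha : 3 ≤ a) (hx : x ∈ Ma a) {x' : ℕ} (hx' : x' ∈ Ma a) :
    (hh a x).testBit (ff a x' - 1) = true ↔ ff a x = ff a x' := by
  rw [hh_testBit ha hx]
  obtain ⟨hf3, -, -, -, -⟩ := ff_facts ha hx
  obtain ⟨hf3', -, hfnp', -, -⟩ := ff_facts ha hx'
  constructor
  · rintro (h | ⟨i, hib, hti, hpi⟩)
    · omega
    · exfalso
      have h1 : (1:ℕ) ≤ 2 ^ i := Nat.one_le_two_pow
      exact hfnp' ⟨i, by omega⟩
  · intro h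
    left
    omega

end Cors

/-- every element of `S` of the form `1 ⊕ 2^α ⊕ 2^α'` with
`0 < α < α'` satisfies `α' < a - m`. -/
theorem weight_three_elements_S (a : ℕ) (ha : 3 ≤ a) :
    ∀ y α α' : ℕ, y < 2 ^ a → toVec a y ∈ Ssub a →
      y = 1 ^^^ 2 ^ α ^^^ 2 ^ α' → 0 < α → α < α' → α' < a - mm a := by
  intro y α α' hy hmem heq hα hαα'
  have hb := bb_two_le ha
  have hPa := pow_bb_pred_le ha
  have haP := lt_pow_bb ha
  have h2P := pow_bb_eq ha
  have hm : mm a = 2 ^ bb a - a - 1 := rfl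
  -- bits of y
  have hybit : ∀ p, y.testBit p = true ↔ (p = 0 ∨ p = α ∨ p = α') := by
    intro p
    have h1 : Nat.testBit 1 p = decide (0 = p) := by
      rw [show (1:ℕ) = 2 ^ 0 from rfl, Nat.testBit_two_pow]
    rw [heq, Nat.testBit_xor, Nat.testBit_xor, h1, Nat.testBit_two_pow, Nat.testBit_two_pow]
    constructor
    · intro h
      by_contra hc
      push_neg at hc
      obtain ⟨hc0, hcα, hcα'⟩ := hc
      rw [decide_eq_false (fun hh : 0 = p => hc0 hh.symm),
        decide_eq_false (fun hh : α = p => hcα hh.symm),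
        decide_eq_false (fun hh : α' = p => hcα' hh.symm)] at h
      simp at h
    · rintro (rfl | rfl | rfl)
      · simp [show α ≠ 0 by omega, show α' ≠ 0 by omega]
      · simp [show (0:ℕ) ≠ p by omega, show α' ≠ p by omega]
      · simp [show (0:ℕ) ≠ p by omega, show α ≠ p by omega]
  have hy0 : y.testBit 0 = true := (hybit 0).mpr (Or.inl rfl)
  have hyα' : y.testBit α' = true := (hybit α').mpr (Or.inr (Or.inr rfl))
  have hα'a : α' < a := by
    by_contra h
    have hlt : y < 2 ^ α' :=
      lt_of_lt_of_le hy (Nat.pow_le_pow_right (by norm_num) (by omega))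
    rw [Nat.testBit_lt_two_pow hlt] at hyα'
    exact absurd hyα' (by simp)
  -- span representation
  rw [Ssub, Submodule.mem_span_set] at hmem
  obtain ⟨cf, hsupp, hsum⟩ := hmem
  set F : Finset (Fin a → ZMod 2) := cf.support with hF
  have hrep : ∑ w ∈ F, w = toVec a y := by
    rw [← hsum, Finsupp.sum]
    exact Finset.sum_congr rfl fun w hw => by
      rw [zmod2_eq_one (Finsupp.mem_support_iff.mp hw), one_smul]
  have hmemMa : ∀ w ∈ F, ∃ x, x ∈ Ma a ∧ toVec a (hh a x) = w := by
    intro w hw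
    obtain ⟨u, ⟨x, hxMa, hux⟩, huw⟩ := hsupp hw
    exact ⟨x, hxMa, by rw [hux, huw]⟩
  have hchoice : ∀ w : Fin a → ZMod 2, ∃ x : ℕ, w ∈ F → (x ∈ Ma a ∧ toVec a (hh a x) = w) := by
    intro w
    by_cases hw : w ∈ F
    · obtain ⟨x, h1, h2⟩ := hmemMa w hw
      exact ⟨x, fun _ => ⟨h1, h2⟩⟩
    · exact ⟨0, fun h => absurd h hw⟩
  choose ξ hξ using hchoice
  have hwMa : ∀ w ∈ F, ξ w ∈ Ma a := fun w hw => (hξ w hw).1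
  have heval : ∀ p, p < a →
      (if y.testBit p = true then (1 : ZMod 2) else 0) =
        ∑ w ∈ F, (if (hh a (ξ w)).testBit p = true then (1 : ZMod 2) else 0) := by
    intro p hp
    have h1 := congrFun hrep ⟨p, hp⟩
    rw [Finset.sum_apply] at h1
    have h2 : toVec a y ⟨p, hp⟩ = (if y.testBit p = true then (1 : ZMod 2) else 0) := by
      simp [toVec]
    rw [h2] at h1
    rw [← h1]
    refine Finset.sum_congr rfl fun w hw => ?_
    conv_lhs => rw [← (hξ w hw).2]
    simp [toVec]
  -- |F| ≤ 2
  have hcard : F.card ≤ 2 := by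
    have hmapsto : ∀ w ∈ F, ff a (ξ w) - 1 ∈ ({α, α'} : Finset ℕ) := by
      intro w hw
      obtain ⟨hf3, hfa, -, -, -⟩ := ff_facts ha (hwMa w hw)
      have h := heval (ff a (ξ w) - 1) (by omega)
      have hterm : ∀ w' ∈ F,
          (if (hh a (ξ w')).testBit (ff a (ξ w) - 1) = true then (1 : ZMod 2) else 0) =
            if w' = w then 1 else 0 := by
        intro w' hw'
        have hch := hh_bit_ff ha (hwMa w' hw') (hwMa w hw)
        by_cases he : w' = w
        · subst he; rw [if_pos rfl, if_pos (hch.mpr rfl)]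
        · rw [if_neg he, if_neg]
          intro hc
          have hxe : ξ w' = ξ w := ff_inj ha (hwMa w' hw') (hwMa w hw) (hch.mp hc)
          exact he (by rw [← (hξ w' hw').2, ← (hξ w hw).2, hxe])
      rw [Finset.sum_congr rfl hterm, Finset.sum_ite_eq' F w (fun _ => (1 : ZMod 2)),
        if_pos hw] at h
      have hyt : y.testBit (ff a (ξ w) - 1) = true := by
        by_contra hcon
        rw [if_neg hcon] at h
        exact absurd h (by decide)
      rcases (hybit _).mp hyt with h0 | h1 | h1
      · omega
      · simp [h1]
      · simp [h1]
    have hinjon : Set.InjOn (fun w => ff a (ξ w) - 1) F := by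
      intro w1 hw1 w2 hw2 he
      dsimp at he
      obtain ⟨h31, -, -, -, -⟩ := ff_facts ha (hwMa w1 hw1)
      obtain ⟨h32, -, -, -, -⟩ := ff_facts ha (hwMa w2 hw2)
      have hef : ff a (ξ w1) = ff a (ξ w2) := by omega
      have hxe := ff_inj ha (hwMa w1 hw1) (hwMa w2 hw2) hef
      rw [← (hξ w1 hw1).2, ← (hξ w2 hw2).2, hxe]
    calc F.card ≤ ({α, α'} : Finset ℕ).card :=
          Finset.card_le_card_of_injOn _ hmapsto hinjon
      _ ≤ 2 := (Finset.card_insert_le _ _).trans (by simp)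
  have hne : F.Nonempty := by
    rcases F.eq_empty_or_nonempty with h | h
    · exfalso
      have h0 := heval 0 (by omega)
      rw [h, Finset.sum_empty, if_pos hy0] at h0
      exact absurd h0 (by decide)
    · exact h
  have hcard12 : F.card = 1 ∨ F.card = 2 := by
    have := Finset.card_pos.mpr hne
    omega
  rcases hcard12 with h1 | h2
  · -- singleton case
    obtain ⟨w, hw⟩ := Finset.card_eq_one.mp h1
    have hwF : w ∈ F := by rw [hw]; exact Finset.mem_singleton_self w
    set z := ξ w with hz'
    have hz : z ∈ Ma a := hwMa w hwF
    obtain ⟨hzf3, hzfa, hzfnp, hzftop, -⟩ := ff_facts ha hz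
    have hztop : z.testBit (bb a - 1) = true := by
      have h := heval 0 (by omega)
      rw [hw, Finset.sum_singleton, if_pos hy0] at h
      by_cases hc : (hh a z).testBit 0 = true
      · exact (hh_bit0 ha hz).mp hc
      · rw [if_neg hc] at h; exact absurd h (by decide)
    have h := heval α' hα'a
    rw [hw, Finset.sum_singleton, if_pos hyα'] at h
    have hhα' : (hh a z).testBit α' = true := by
      by_cases hc : (hh a z).testBit α' = true
      · exact hc
      · rw [if_neg hc] at h; exact absurd h (by decide)
    rw [hh_testBit ha hz] at hhα'
    rcases hhα' with hcase | ⟨i, hib, hti, hpi⟩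
    · have := hzftop hztop
      omega
    · by_cases hi0 : i = 0
      · subst hi0; simp at hpi; omega
      · rw [if_neg hi0] at hti
        have hlt : i - 1 < bb a - 1 := by omega
        have hge := two_bits_le hlt hti hztop
        have hza := hz.2.1
        have hp2 : (2:ℕ) ^ i = 2 * 2 ^ (i - 1) := by
          conv_lhs => rw [show i = (i - 1) + 1 by omega]
          rw [pow_succ]; ring
        have hp3 : (2:ℕ) ^ i ≤ 2 ^ (bb a - 1) := Nat.pow_le_pow_right (by norm_num) (by omega)
        omega
  · -- two-element case
    obtain ⟨w1, w2, hwne, hw⟩ := Finset.card_eq_two.mp h2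
    have hw1F : w1 ∈ F := by rw [hw]; simp
    have hw2F : w2 ∈ F := by rw [hw]; simp
    set r := ξ w1 with hr'
    set s := ξ w2 with hs'
    have hr : r ∈ Ma a := hwMa w1 hw1F
    have hs : s ∈ Ma a := hwMa w2 hw2F
    obtain ⟨hrf3, hrfa, hrfnp, hrftop, hrflow⟩ := ff_facts ha hr
    obtain ⟨hsf3, hsfa, hsfnp, hsftop, hsflow⟩ := ff_facts ha hs
    have hrs : r ≠ s := by
      intro hcon
      exact hwne (by
        rw [← (hξ w1 hw1F).2, ← (hξ w2 hw2F).2]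
        exact congrArg (fun t => toVec a (hh a t)) hcon)
    have hsum2 : ∀ p, p < a →
        (if y.testBit p = true then (1 : ZMod 2) else 0) =
          (if (hh a r).testBit p = true then (1 : ZMod 2) else 0) +
            (if (hh a s).testBit p = true then (1 : ZMod 2) else 0) := by
      intro p hp
      have h := heval p hp
      rw [hw, Finset.sum_insert (by simpa using hwne), Finset.sum_singleton] at h
      exact h
    have hfne : ff a r ≠ ff a s := fun hcon => hrs (ff_inj ha hr hs hcon)
    have hmem1 : ff a r - 1 = α ∨ ff a r - 1 = α' := by
      have h := hsum2 (ff a r - 1) (by omega)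
      rw [if_pos ((hh_bit_ff ha hr hr).mpr rfl)] at h
      rw [if_neg (fun hc => hfne (((hh_bit_ff ha hs hr).mp hc)).symm), add_zero] at h
      have hyt : y.testBit (ff a r - 1) = true := by
        by_contra hcon
        rw [if_neg hcon] at h
        exact absurd h (by decide)
      rcases (hybit _).mp hyt with h0 | hh1 | hh1
      · omega
      · exact Or.inl hh1
      · exact Or.inr hh1
    have hmem2 : ff a s - 1 = α ∨ ff a s - 1 = α' := by
      have h := hsum2 (ff a s - 1) (by omega)
      rw [if_pos ((hh_bit_ff ha hs hs).mpr rfl)] at h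
      rw [if_neg (fun hc => hfne ((hh_bit_ff ha hr hs).mp hc)), add_comm, add_zero] at h
      have hyt : y.testBit (ff a s - 1) = true := by
        by_contra hcon
        rw [if_neg hcon] at h
        exact absurd h (by decide)
      rcases (hybit _).mp hyt with h0 | hh1 | hh1
      · omega
      · exact Or.inl hh1
      · exact Or.inr hh1
    have hfne' : ff a r - 1 ≠ ff a s - 1 := by omega
    have hα'mem : α' = ff a r - 1 ∨ α' = ff a s - 1 := by omega
    have hagree : ∀ j, j < bb a - 1 → r.testBit j = s.testBit j := by
      intro j hj
      have hi0 : j + 1 ≠ 0 := by omega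
      have hib : j + 1 < bb a := by omega
      have h2j : (2:ℕ) ≤ 2 ^ (j + 1) := by
        have := Nat.pow_le_pow_right (show 1 ≤ 2 by norm_num) (show 1 ≤ j + 1 by omega)
        simpa using this
      have hp1 : (2:ℕ) ^ (j + 1) ≤ 2 ^ (bb a - 1) :=
        Nat.pow_le_pow_right (by norm_num) (by omega)
      have hplt : 2 ^ (j + 1) - 1 < a := by omega
      have h := hsum2 (2 ^ (j + 1) - 1) hplt
      have hyf : ¬ (y.testBit (2 ^ (j + 1) - 1) = true) := by
        rw [hybit]
        push_neg
        refine ⟨by omega, ?_, ?_⟩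
        · rcases hα'mem with hv | hv <;> rcases hmem1 with hu | hu <;> rcases hmem2 with hu2 | hu2 <;>
            first
              | (intro hcon; exact hrfnp ⟨j + 1, by omega⟩)
              | (intro hcon; exact hsfnp ⟨j + 1, by omega⟩)
              | omega
        · rcases hα'mem with hv | hv
          · intro hcon; exact hrfnp ⟨j + 1, by omega⟩
          · intro hcon; exact hsfnp ⟨j + 1, by omega⟩
      rw [if_neg hyf] at h
      have hcr := hh_bit_special ha hr hi0 hib
      have hcs := hh_bit_special ha hs hi0 hib
      rw [Nat.add_sub_cancel] at hcr hcs
      cases hrb : r.testBit j <;> cases hsb : s.testBit j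
      · rfl
      · exfalso
        rw [if_neg (fun hc => by rw [hcr.mp hc] at hrb; exact Bool.noConfusion hrb),
          if_pos (hcs.mpr hsb), zero_add] at h
        exact absurd h (by decide)
      · exfalso
        rw [if_pos (hcr.mpr hrb),
          if_neg (fun hc => by rw [hcs.mp hc] at hsb; exact Bool.noConfusion hsb), add_zero] at h
        exact absurd h (by decide)
      · rfl
    -- the key sublemma
    have key : ∀ u v : ℕ, u ∈ Ma a → v ∈ Ma a →
        (∀ j, j < bb a - 1 → u.testBit j = v.testBit j) →
        u.testBit (bb a - 1) = false → v.testBit (bb a - 1) = true →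
        ff a u - 1 < a - mm a ∧ ff a v - 1 < a - mm a := by
      intro u v hu hv hagr hu0 hv1
      obtain ⟨huf3, hufa, -, -, huflow⟩ := ff_facts ha hu
      obtain ⟨hvf3, hvfa, -, hvftop, -⟩ := ff_facts ha hv
      have hvtop := hvftop hv1
      have hua := hu.2.1
      have hva := hv.2.1
      have huP : u < 2 ^ (bb a - 1) := by
        by_contra hcon
        push_neg at hcon
        have hult : u < 2 ^ ((bb a - 1) + 1) := by rw [pow_succ]; omega
        rw [(testBit_true_iff hult).mpr hcon] at hu0
        exact Bool.noConfusion hu0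
      have hv2 : 2 ^ (bb a - 1) ≤ v := Nat.ge_two_pow_of_testBit hv1
      have hdiv : v / 2 ^ (bb a - 1) = 1 := by
        apply Nat.div_eq_of_lt_le
        · simpa using hv2
        · omega
      have hvm : v = 2 ^ (bb a - 1) + v % 2 ^ (bb a - 1) := by
        have := Nat.div_add_mod v (2 ^ (bb a - 1))
        rw [hdiv, mul_one] at this
        omega
      have hmod : u % 2 ^ (bb a - 1) = v % 2 ^ (bb a - 1) := by
        apply Nat.eq_of_testBit_eq
        intro i
        rw [Nat.testBit_mod_two_pow, Nat.testBit_mod_two_pow]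
        by_cases hi : i < bb a - 1
        · simp [hi, hagr i hi]
        · simp [hi]
      have hueq : u % 2 ^ (bb a - 1) = u := Nat.mod_eq_of_lt huP
      have huv : v = 2 ^ (bb a - 1) + u := by rw [hvm, hueq.symm, hmod]
      have h2u : 2 * u ≤ a := by omega
      have hfu : ff a u = 2 * u := huflow h2u
      constructor
      · omega
      · omega
    cases htopr : r.testBit (bb a - 1) with
    | false =>
      have htops : s.testBit (bb a - 1) = true := by
        cases htops : s.testBit (bb a - 1) with
        | true => rfl
        | false =>
          exfalso
          have h := hsum2 0 (by omega)
          have hnr : ¬((hh a r).testBit 0 = true) := fun hc => by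
            have hcc := (hh_bit0 ha hr).mp hc
            rw [htopr] at hcc
            exact Bool.noConfusion hcc
          have hns : ¬((hh a s).testBit 0 = true) := fun hc => by
            have hcc := (hh_bit0 ha hs).mp hc
            rw [htops] at hcc
            exact Bool.noConfusion hcc
          rw [if_pos hy0, if_neg hnr, if_neg hns] at h
          exact absurd h (by decide)
      obtain ⟨k1, k2⟩ := key r s hr hs hagree htopr htops
      rcases hα'mem with hv | hv <;> omega
    | true =>
      have htops : s.testBit (bb a - 1) = false := by
        cases htops : s.testBit (bb a - 1) with
        | false => rfl
        | true =>
          exfalso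
          have h := hsum2 0 (by omega)
          rw [if_pos hy0, if_pos ((hh_bit0 ha hr).mpr htopr),
            if_pos ((hh_bit0 ha hs).mpr htops)] at h
          exact absurd h (by decide)
      obtain ⟨k2, k1⟩ := key s r hs hr (fun j hj => (hagree j hj).symm) htops htopr
      rcases hα'mem with hv | hv <;> omega
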